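/- Let S be an infinite set of monic polynomials in R = 𝔽_q[x] and let m, n, k ∈ ℕ. If A/B and P/Q are two distinct elements of F^m_{k,S} with ‖A/B − P/Q‖ < q^{−n}, then 2k > n. Consequently, for every k ≤ n/2, the balls B(x, q^{−(n+1)}) for x ∈ F^m_{k,S} are pairwise disjoint, and the number of distinct balls among {B(x, q^{−(n+1)}) : x ∈ F^m_{k,S}} equals #F^m_{k,S}. -/

import Mathlib

set_option linter.unusedSectionVars false


open Polynomial MeasureTheory
open scoped Classical ENNReal NNReal

/- Setting: `Fq` is a finite field with `q` elements (`q` a prime power),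
`R = Fq[x]`, and `K_∞ = Fq((x⁻¹))` is realized as the field `LaurentSeries Fq`
of formal Laurent series in the variable `u = x⁻¹`. -/

variable (Fq : Type) [Field Fq] [Fintype Fq] [DecidableEq Fq]

/-- `K_∞ = 𝔽_q((x⁻¹))`, realized as Laurent series in the variable `u = x⁻¹`. -/
abbrev Kinf := LaurentSeries Fq

/-- The embedding of `R = 𝔽_q[x]` into `K_∞`, sending `x` to `u⁻¹`. -/
noncomputable def emb : Polynomial Fq →+* Kinf Fq :=
  (Polynomial.aeval ((HahnSeries.single (-1 : ℤ) (1 : Fq)) : LaurentSeries Fq)).toRingHom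

/-- `q`, as a nonnegative real number. -/
noncomputable def qc : NNReal := (Fintype.card Fq : NNReal)

/-- The absolute value `|α| = q^{-ord(α)}` on `K_∞` (so that `|f| = q^{deg f}` for a nonzero
polynomial `f ∈ 𝔽_q[x]`, since `f(u⁻¹)` has order `-deg f` as a Laurent series in `u`). -/
noncomputable def fabs (α : Kinf Fq) : NNReal :=
  if α = 0 then 0 else (qc Fq) ^ (-(HahnSeries.order α))

/-- The sup norm `‖v‖ = max_i |v_i|` on `K_∞^m`. -/
noncomputable def vnorm {m : ℕ} (v : Fin m → Kinf Fq) : NNReal :=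
  Finset.univ.sup fun i => fabs Fq (v i)

/-- The maximal ideal `𝔪 = {α ∈ K_∞ : |α| ≤ q⁻¹}`. -/
noncomputable def mfrak : Set (Kinf Fq) := {α | fabs Fq α ≤ (qc Fq)⁻¹}

/-- `𝔪^m ⊆ K_∞^m`. -/
noncomputable def mfrakV (m : ℕ) : Set (Fin m → Kinf Fq) := {α | ∀ i, α i ∈ mfrak Fq}

/-- `(P, Q)` is a primitive vector of `R^{m+1}`, i.e. `gcd(P₁, …, P_m, Q) = 1`:
every common divisor is a unit. -/
def Primitive {m : ℕ} (P : Fin m → Polynomial Fq) (Q : Polynomial Fq) : Prop :=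
  ∀ d : Polynomial Fq, d ∣ Q → (∀ i, d ∣ P i) → IsUnit d

/-- The point `P/Q ∈ K_∞^m` determined by `P ∈ R^m` and `Q ∈ R`. -/
noncomputable def ratV {m : ℕ} (P : Fin m → Polynomial Fq) (Q : Polynomial Fq) :
    Fin m → Kinf Fq := fun i => emb Fq (P i) / emb Fq Q

/-- `deg_{min,S}(α, q^{-n})`: the least `d` such that there is `(P,Q) ∈ R̂^{m+1}` with
`Q ∈ S`, `deg Q = d`, `‖P‖ < |Q|` and `‖α - P/Q‖ < q^{-n}`. -/
noncomputable def degMin (S : Set (Polynomial Fq)) (m n : ℕ) (α : Fin m → Kinf Fq) : ℕ :=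
  sInf {d : ℕ | ∃ (P : Fin m → Polynomial Fq) (Q : Polynomial Fq),
    Q ∈ S ∧ Q.natDegree = d ∧ Primitive Fq P Q ∧
    vnorm Fq (ratV Fq P 1) < fabs Fq (emb Fq Q) ∧
    vnorm Fq (α - ratV Fq P Q) < (qc Fq) ^ (-(n : ℤ))}

/-- `m_S(n) = min {k ≥ n : S ∩ R_{=k} ≠ ∅}`. -/
noncomputable def mS (S : Set (Polynomial Fq)) (n : ℕ) : ℕ :=
  sInf {k : ℕ | n ≤ k ∧ ∃ Q ∈ S, Q.natDegree = k}

/-- `d_{N,S}(a) = deg_{min,S}(a/N, q^{-deg N})`. -/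
noncomputable def dN (S : Set (Polynomial Fq)) (m : ℕ) (N : Polynomial Fq)
    (a : Fin m → Polynomial Fq) : ℕ :=
  degMin Fq S m N.natDegree (ratV Fq a N)

/-- `R_{<n}^m`, the set of vectors of polynomials of degree `< n`. -/
def polyVecLT (m n : ℕ) : Set (Fin m → Polynomial Fq) :=
  {a | ∀ i, (a i).degree < (n : ℕ)}

/-- The `S`-Farey fractions of degree at most `k` in `K_∞^m` (the zero vector is
included, as the fraction `0/1`). -/
noncomputable def Farey (S : Set (Polynomial Fq)) (m k : ℕ) : Set (Fin m → Kinf Fq) :=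
  {x | ∃ (P : Fin m → Polynomial Fq) (Q : Polynomial Fq), Q ∈ S ∧ Primitive Fq P Q ∧
    vnorm Fq (ratV Fq P 1) < fabs Fq (emb Fq Q) ∧ Q.natDegree ≤ k ∧ x = ratV Fq P Q}

/-- The (closed) ball `B(v, r) = {u ∈ K_∞^m : ‖v - u‖ ≤ r}`. -/
noncomputable def ball {m : ℕ} (v : Fin m → Kinf Fq) (r : NNReal) : Set (Fin m → Kinf Fq) :=
  {u | vnorm Fq (v - u) ≤ r}

/-- `Q` is the (unique monic) `S`-minimal denominator for `(α, q^{-n})`, i.e.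
`Q_{min,S}(α, q^{-n}) = Q`: `Q ∈ S`, `deg Q = deg_{min,S}(α, q^{-n})`, and there is
`P ∈ R^m` with `(P,Q) ∈ R̂^{m+1}` and `‖α - P/Q‖ < q^{-n}`. -/
noncomputable def IsMinDenom (S : Set (Polynomial Fq)) (m n : ℕ) (α : Fin m → Kinf Fq)
    (Q : Polynomial Fq) : Prop :=
  Q ∈ S ∧ Q.natDegree = degMin Fq S m n α ∧
    ∃ P : Fin m → Polynomial Fq, Primitive Fq P Q ∧
      vnorm Fq (α - ratV Fq P Q) < (qc Fq) ^ (-(n : ℤ))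


section Aux

variable {Fq : Type} [Field Fq] [Fintype Fq] [DecidableEq Fq]

lemma one_lt_qc : 1 < qc Fq := by
  rw [qc]
  exact_mod_cast Fintype.one_lt_card

lemma qc_pos : 0 < qc Fq := lt_trans zero_lt_one one_lt_qc

lemma qc_ne_zero : qc Fq ≠ 0 := qc_pos.ne'

lemma hs_coeff_sum {ι : Type*} (s : Finset ι) (F : ι → Kinf Fq) (j : ℤ) :
    (∑ i ∈ s, F i).coeff j = ∑ i ∈ s, (F i).coeff j := by
  classical
  induction s using Finset.induction with
  | empty => simp
  | insert _ _ h ih => rw [Finset.sum_insert h, Finset.sum_insert h, HahnSeries.coeff_add, ih]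

lemma emb_coeff (f : Polynomial Fq) (j : ℤ) :
    (emb Fq f).coeff j =
      ∑ i ∈ Finset.range (f.natDegree + 1), (if j = -(i : ℤ) then f.coeff i else 0) := by
  rw [emb]
  simp only [AlgHom.toRingHom_eq_coe, RingHom.coe_coe]
  rw [Polynomial.aeval_eq_sum_range, hs_coeff_sum]
  refine Finset.sum_congr rfl fun i _ => ?_
  rw [Algebra.smul_def, HahnSeries.single_pow, one_pow]
  have h1 : i • (-1 : ℤ) = -(i : ℤ) := by simp
  have h2 : algebraMap Fq (Kinf Fq) (f.coeff i) = HahnSeries.single (0 : ℤ) (f.coeff i) := by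
    rw [HahnSeries.algebraMap_apply', ← PowerSeries.C_eq_algebraMap, HahnSeries.ofPowerSeries_C,
      HahnSeries.C_apply]
  rw [h1, h2, HahnSeries.single_mul_single, zero_add, mul_one, HahnSeries.coeff_single]
  simp

lemma emb_coeff_top (f : Polynomial Fq) :
    (emb Fq f).coeff (-(f.natDegree : ℤ)) = f.leadingCoeff := by
  rw [emb_coeff, Finset.sum_eq_single f.natDegree]
  · rw [if_pos rfl, Polynomial.leadingCoeff]
  · intro i _ hne
    rw [if_neg]
    intro h
    exact hne (by exact_mod_cast (neg_inj.mp h).symm)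
  · intro h
    exact absurd (Finset.self_mem_range_succ f.natDegree) h

lemma emb_coeff_low (f : Polynomial Fq) {j : ℤ} (hj : j < -(f.natDegree : ℤ)) :
    (emb Fq f).coeff j = 0 := by
  rw [emb_coeff]
  apply Finset.sum_eq_zero
  intro i hi
  rw [if_neg]
  intro h
  have hi' : i ≤ f.natDegree := Nat.lt_succ_iff.mp (Finset.mem_range.mp hi)
  have : -(f.natDegree : ℤ) ≤ -(i : ℤ) := by exact_mod_cast neg_le_neg (by exact_mod_cast hi')
  omega

lemma emb_ne_zero {f : Polynomial Fq} (hf : f ≠ 0) : emb Fq f ≠ 0 := by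
  intro h
  have := emb_coeff_top f
  rw [h] at this
  simp only [HahnSeries.coeff_zero] at this
  exact Polynomial.leadingCoeff_ne_zero.mpr hf this.symm

lemma emb_order {f : Polynomial Fq} (hf : f ≠ 0) :
    (emb Fq f).order = -(f.natDegree : ℤ) := by
  refine le_antisymm ?_ ?_
  · apply HahnSeries.order_le_of_coeff_ne_zero
    rw [emb_coeff_top]
    exact Polynomial.leadingCoeff_ne_zero.mpr hf
  · by_contra h
    push_neg at h
    exact HahnSeries.coeff_order_eq_zero.not.mpr (emb_ne_zero hf) (emb_coeff_low f h)

lemma fabs_emb {f : Polynomial Fq} (hf : f ≠ 0) :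
    fabs Fq (emb Fq f) = (qc Fq) ^ (f.natDegree : ℤ) := by
  rw [fabs, if_neg (emb_ne_zero hf), emb_order hf, neg_neg]

lemma fabs_eq_zero {α : Kinf Fq} : fabs Fq α = 0 ↔ α = 0 := by
  rw [fabs]
  split_ifs with h
  · simp [h]
  · simp [h, (zpow_pos (qc_pos (Fq := Fq)) _).ne']

lemma fabs_mul (α β : Kinf Fq) : fabs Fq (α * β) = fabs Fq α * fabs Fq β := by
  by_cases hα : α = 0
  · simp [hα, fabs]
  by_cases hβ : β = 0
  · simp [hβ, fabs]
  rw [fabs, fabs, fabs, if_neg hα, if_neg hβ, if_neg (mul_ne_zero hα hβ),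
    HahnSeries.order_mul hα hβ, neg_add, zpow_add₀ (qc_ne_zero (Fq := Fq))]

lemma fabs_div (α β : Kinf Fq) : fabs Fq (α / β) = fabs Fq α / fabs Fq β := by
  by_cases hβ : β = 0
  · simp [hβ, fabs]
  have h := fabs_mul (Fq := Fq) (α / β) β
  rw [div_mul_cancel₀ _ hβ] at h
  rw [eq_div_iff (fabs_eq_zero.not.mpr hβ ∘ id)]
  · exact h.symm

lemma fabs_add_le (α β : Kinf Fq) :
    fabs Fq (α + β) ≤ max (fabs Fq α) (fabs Fq β) := by
  by_cases hα : α = 0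
  · simp [hα, le_max_iff]
  by_cases hβ : β = 0
  · simp [hβ, le_max_iff]
  by_cases hαβ : α + β = 0
  · simp [hαβ, fabs]
  have hord := HahnSeries.min_order_le_order_add hαβ
  have hmono : Monotone fun z : ℤ => (qc Fq) ^ z :=
    fun a b h => zpow_le_zpow_right₀ (one_lt_qc (Fq := Fq)).le h
  rw [fabs, fabs, fabs, if_neg hα, if_neg hβ, if_neg hαβ]
  calc (qc Fq) ^ (-(α + β).order)
      ≤ (qc Fq) ^ (-(min α.order β.order)) := hmono (neg_le_neg hord)
    _ = (qc Fq) ^ (max (-α.order) (-β.order)) := by rw [neg_inf]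
    _ = max ((qc Fq) ^ (-α.order)) ((qc Fq) ^ (-β.order)) := hmono.map_max

lemma fabs_neg (α : Kinf Fq) : fabs Fq (-α) = fabs Fq α := by
  by_cases hα : α = 0
  · simp [hα]
  rw [fabs, fabs, if_neg hα, if_neg (neg_ne_zero.mpr hα), HahnSeries.order_neg]

lemma le_vnorm {m : ℕ} (v : Fin m → Kinf Fq) (i : Fin m) :
    fabs Fq (v i) ≤ vnorm Fq v := by
  rw [vnorm]
  exact Finset.le_sup (f := fun i => fabs Fq (v i)) (Finset.mem_univ i)

lemma vnorm_le {m : ℕ} {v : Fin m → Kinf Fq} {r : NNReal} (h : ∀ i, fabs Fq (v i) ≤ r) :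
    vnorm Fq v ≤ r :=
  Finset.sup_le fun i _ => h i

lemma vnorm_sub_le {m : ℕ} (a b : Fin m → Kinf Fq) :
    vnorm Fq (a - b) ≤ max (vnorm Fq a) (vnorm Fq b) := by
  apply vnorm_le
  intro i
  have : (a - b) i = a i + (-(b i)) := by simp [sub_eq_add_neg]
  rw [this]
  refine le_trans (fabs_add_le _ _) ?_
  rw [fabs_neg]
  exact max_le_max (le_vnorm a i) (le_vnorm b i)

end Aux

/-- two distinct points of `F^m_{k,S}` at distance `< q^{-n}` force
`2k > n`; consequently for `2k ≤ n` the balls `B(x, q^{-(n+1)})`, `x ∈ F^m_{k,S}`, are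
pairwise disjoint, and the number of distinct such balls is `#F^m_{k,S}`. -/
theorem stmt10 (S : Set (Polynomial Fq)) (hSinf : S.Infinite) (hSmonic : ∀ Q ∈ S, Q.Monic)
    (m n k : ℕ) :
    (∀ x ∈ Farey Fq S m k, ∀ y ∈ Farey Fq S m k, x ≠ y →
      vnorm Fq (x - y) < (qc Fq) ^ (-(n : ℤ)) → n < 2 * k) ∧
    (2 * k ≤ n →
      ((Farey Fq S m k).Pairwise fun x y =>
          Disjoint (ball Fq x ((qc Fq) ^ (-(n + 1 : ℤ)))) (ball Fq y ((qc Fq) ^ (-(n + 1 : ℤ))))) ∧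
        Set.ncard ((fun x => ball Fq x ((qc Fq) ^ (-(n + 1 : ℤ)))) '' Farey Fq S m k)
          = (Farey Fq S m k).ncard) := by
  have hmono : StrictMono fun z : ℤ => (qc Fq) ^ z :=
    fun a b h => (zpow_lt_zpow_iff_right₀ (one_lt_qc (Fq := Fq))).mpr h
  have h1 : ∀ x ∈ Farey Fq S m k, ∀ y ∈ Farey Fq S m k, x ≠ y →
      vnorm Fq (x - y) < (qc Fq) ^ (-(n : ℤ)) → n < 2 * k := by
    intro x hx y hy hxy hdist
    obtain ⟨A, B, hBS, -, -, hBk, rfl⟩ := hx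
    obtain ⟨P, Q, hQS, -, -, hQk, rfl⟩ := hy
    have hB0 : B ≠ 0 := (hSmonic B hBS).ne_zero
    have hQ0 : Q ≠ 0 := (hSmonic Q hQS).ne_zero
    have hB0' : emb Fq B ≠ 0 := emb_ne_zero hB0
    have hQ0' : emb Fq Q ≠ 0 := emb_ne_zero hQ0
    obtain ⟨i, hi⟩ := Function.ne_iff.mp hxy
    set N : Polynomial Fq := A i * Q - P i * B with hN
    have hkey : (ratV Fq A B - ratV Fq P Q) i = emb Fq N / emb Fq (B * Q) := by
      simp only [Pi.sub_apply, ratV, hN, map_sub, map_mul]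
      rw [div_sub_div _ _ hB0' hQ0', mul_comm ((emb Fq) B) ((emb Fq) (P i))]
    have hdi : (ratV Fq A B - ratV Fq P Q) i ≠ 0 := sub_ne_zero.mpr hi
    have hN0' : emb Fq N ≠ 0 := by
      intro h
      rw [hkey, h, zero_div] at hdi
      exact hdi rfl
    have hN0 : N ≠ 0 := by
      intro h
      exact hN0' (by rw [h, map_zero])
    have hBQ0 : B * Q ≠ 0 := mul_ne_zero hB0 hQ0
    have hdegBQ : ((B * Q).natDegree : ℤ) ≤ 2 * k := by
      rw [Polynomial.natDegree_mul hB0 hQ0]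
      push_cast
      omega
    have hfabs : fabs Fq ((ratV Fq A B - ratV Fq P Q) i)
        = (qc Fq) ^ ((N.natDegree : ℤ) - ((B * Q).natDegree : ℤ)) := by
      rw [hkey, fabs_div, fabs_emb hN0, fabs_emb hBQ0,
        ← zpow_sub₀ (qc_ne_zero (Fq := Fq))]
    have hlow : (qc Fq) ^ (-(2 * k : ℤ)) ≤ fabs Fq ((ratV Fq A B - ratV Fq P Q) i) := by
      rw [hfabs]
      exact hmono.monotone (by omega)
    have hlt : (qc Fq) ^ (-(2 * k : ℤ)) < (qc Fq) ^ (-(n : ℤ)) :=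
      lt_of_le_of_lt (le_trans hlow (le_vnorm _ i)) hdist
    have := hmono.lt_iff_lt.mp hlt
    omega
  refine ⟨h1, fun h2k => ?_⟩
  have hpd : (Farey Fq S m k).Pairwise fun x y =>
      Disjoint (ball Fq x ((qc Fq) ^ (-(n + 1 : ℤ)))) (ball Fq y ((qc Fq) ^ (-(n + 1 : ℤ)))) := by
    intro x hx y hy hxy
    rw [Set.disjoint_left]
    intro z hzx hzy
    have hzx' : vnorm Fq (x - z) ≤ (qc Fq) ^ (-(n + 1 : ℤ)) := hzx
    have hzy' : vnorm Fq (y - z) ≤ (qc Fq) ^ (-(n + 1 : ℤ)) := hzy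
    have hsub : x - y = (x - z) - (y - z) := by ring
    have hle : vnorm Fq (x - y) < (qc Fq) ^ (-(n : ℤ)) := by
      calc vnorm Fq (x - y) ≤ max (vnorm Fq (x - z)) (vnorm Fq (y - z)) := by
            rw [hsub]; exact vnorm_sub_le _ _
        _ ≤ (qc Fq) ^ (-(n + 1 : ℤ)) := max_le hzx' hzy'
        _ < (qc Fq) ^ (-(n : ℤ)) := hmono (by omega)
    have := h1 x hx y hy hxy hle
    omega
  refine ⟨hpd, ?_⟩
  apply Set.ncard_image_of_injOn
  intro x hx y hy h
  by_contra hne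
  have hdisj := hpd hx hy hne
  have hmemx : x ∈ ball Fq x ((qc Fq) ^ (-(n + 1 : ℤ))) := by
    show vnorm Fq (x - x) ≤ _
    rw [sub_self]
    exact le_trans (vnorm_le fun i => by simp [fabs]) zero_le
  replace h : ball Fq x ((qc Fq) ^ (-(n + 1 : ℤ))) = ball Fq y ((qc Fq) ^ (-(n + 1 : ℤ))) := h
  have hmemy : x ∈ ball Fq y ((qc Fq) ^ (-(n + 1 : ℤ))) := h ▸ hmemx
  exact Set.disjoint_left.mp hdisj hmemx hmemy
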